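/- A graph G is a big-μ graph (i.e., G = (K_1 ∪ K_t) + H for some t ≥ 0 and graph H) if and only if there exists a vertex v of G adjacent to every vertex u of G − v satisfying deg_{G−v}(u) < n(G) − 2. -/

import Mathlib

namespace MutualVisibility

open SimpleGraph

variable {V W : Type*}

/-- `x` and `y` are `X`-visible in `G`: there is a shortest `x,y`-path all of whose
internal vertices avoid `X`. -/
def Visible (G : SimpleGraph V) (X : Set V) (x y : V) : Prop :=
  ∃ p : G.Walk x y, p.length = G.dist x y ∧ ∀ v ∈ p.support, v ≠ x → v ≠ y → v ∉ X

/-- `X` is a mutual-visibility set: any two vertices of `X` are `X`-visible. -/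
def IsMutualVisSet (G : SimpleGraph V) (X : Set V) : Prop :=
  ∀ x ∈ X, ∀ y ∈ X, Visible G X x y

/-- outer mutual-visibility set -/
def IsOuterMutualVisSet (G : SimpleGraph V) (X : Set V) : Prop :=
  IsMutualVisSet G X ∧ ∀ x ∈ X, ∀ y ∉ X, Visible G X x y

/-- dual mutual-visibility set -/
def IsDualMutualVisSet (G : SimpleGraph V) (X : Set V) : Prop :=
  IsMutualVisSet G X ∧ ∀ x ∉ X, ∀ y ∉ X, Visible G X x y

/-- total mutual-visibility set -/
def IsTotalMutualVisSet (G : SimpleGraph V) (X : Set V) : Prop :=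
  ∀ x y : V, Visible G X x y

/-- mutual-visibility number μ(G) -/
noncomputable def mu (G : SimpleGraph V) : ℕ :=
  sSup {k | ∃ X : Set V, IsMutualVisSet G X ∧ X.ncard = k}

/-- outer mutual-visibility number μ_o(G) -/
noncomputable def muOuter (G : SimpleGraph V) : ℕ :=
  sSup {k | ∃ X : Set V, IsOuterMutualVisSet G X ∧ X.ncard = k}

/-- dual mutual-visibility number μ_d(G) -/
noncomputable def muDual (G : SimpleGraph V) : ℕ :=
  sSup {k | ∃ X : Set V, IsDualMutualVisSet G X ∧ X.ncard = k}

/-- total mutual-visibility number μ_t(G) -/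
noncomputable def muTotal (G : SimpleGraph V) : ℕ :=
  sSup {k | ∃ X : Set V, IsTotalMutualVisSet G X ∧ X.ncard = k}

/-- `H` contains a subgraph copy of `F`. -/
def ContainsCopy (F : SimpleGraph W) (H : SimpleGraph V) : Prop :=
  ∃ f : W → V, Function.Injective f ∧ ∀ a b, F.Adj a b → H.Adj (f a) (f b)

/-- The Turán number ex(n; F): max number of edges of an `n`-vertex graph with no copy of `F`. -/
noncomputable def exNum (n : ℕ) (F : SimpleGraph W) : ℕ :=
  sSup {k | ∃ H : SimpleGraph (Fin n), ¬ ContainsCopy F H ∧ H.edgeSet.ncard = k}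

/-- The direct (tensor/categorical) product of graphs. -/
def directProd (G : SimpleGraph V) (H : SimpleGraph W) : SimpleGraph (V × W) where
  Adj x y := G.Adj x.1 y.1 ∧ H.Adj x.2 y.2
  symm := ⟨fun _ _ h => ⟨h.1.symm, h.2.symm⟩⟩
  loopless := ⟨fun x h => G.irrefl h.1⟩

/-- The join `G + H` of two graphs. -/
def graphJoin (G : SimpleGraph V) (H : SimpleGraph W) : SimpleGraph (V ⊕ W) where
  Adj u v := match u, v with
    | Sum.inl a, Sum.inl b => G.Adj a b
    | Sum.inr a, Sum.inr b => H.Adj a b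
    | _, _ => True
  symm := ⟨fun u v => match u, v with
    | Sum.inl _, Sum.inl _ => fun h => SimpleGraph.Adj.symm h
    | Sum.inr _, Sum.inr _ => fun h => SimpleGraph.Adj.symm h
    | Sum.inl _, Sum.inr _ => fun _ => trivial
    | Sum.inr _, Sum.inl _ => fun _ => trivial⟩
  loopless := ⟨fun u => match u with
    | Sum.inl _ => fun h => G.irrefl h
    | Sum.inr _ => fun h => H.irrefl h⟩

/-- A big-μ graph: `G = (K_1 ∪ K_t) + H` for some `t ≥ 0` and some graph `H`. -/
def IsBigMu {V : Type} (G : SimpleGraph V) : Prop :=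
  ∃ (t : ℕ) (W : Type) (H : SimpleGraph W),
    Nonempty (G ≃g graphJoin ((⊤ : SimpleGraph (Fin 1)) ⊕g (⊤ : SimpleGraph (Fin t))) H)

/-- A cograph: a graph with no induced path on four vertices. -/
def IsCograph (G : SimpleGraph V) : Prop :=
  ¬ ∃ f : Fin 4 → V, Function.Injective f ∧
      ∀ a b, (pathGraph 4).Adj a b ↔ G.Adj (f a) (f b)

/-- The Petersen graph, realized as the Kneser graph K(5,2). -/
def petersen : SimpleGraph {s : Finset (Fin 5) // s.card = 2} where
  Adj a b := Disjoint a.1 b.1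
  symm := ⟨fun _ _ h => h.symm⟩
  loopless := ⟨by
    rintro ⟨s, hs⟩ h
    rw [disjoint_self, Finset.bot_eq_empty] at h
    subst h
    simp at hs⟩

theorem bigMu_iff_exists_enabling {V : Type} [Fintype V] (G : SimpleGraph V) :
    IsBigMu G ↔ ∃ v : V, ∀ u : V, u ≠ v →
      ((G.neighborSet u) \ {v}).ncard < Fintype.card V - 2 → G.Adj v u := by
  classical
  constructor
  · rintro ⟨t, W, H, ⟨e⟩⟩
    set v := e.symm (Sum.inl (Sum.inl 0)) with hvdef
    refine ⟨v, fun u hu hcard => ?_⟩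
    by_contra hadj
    have hev : e v = Sum.inl (Sum.inl 0) := e.toEquiv.apply_symm_apply _
    have key : ∀ a b : V, G.Adj a b ↔
        (graphJoin ((⊤ : SimpleGraph (Fin 1)) ⊕g (⊤ : SimpleGraph (Fin t))) H).Adj (e a) (e b) :=
      fun a b => e.map_adj_iff.symm
    have einj : Function.Injective (⇑e) := e.toEquiv.injective
    rcases h : e u with (j | i) | w
    · have hj : j = (0 : Fin 1) := Subsingleton.elim _ _
      exact hu (einj (by rw [h, hj, hev]))
    · -- main case: u on the K_t side
      have hsub : (Set.univ \ {u, v} : Set V) ⊆ G.neighborSet u \ {v} := by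
        intro w hw
        obtain ⟨-, hw2⟩ := hw
        have hwu : w ≠ u := fun h' => hw2 (by simp [h'])
        have hwv : w ≠ v := fun h' => hw2 (by simp [h'])
        refine ⟨?_, hwv⟩
        have : G.Adj u w := by
          rw [key u w]
          rcases h2 : e w with (j2 | i2) | w2
          · exact absurd (einj (by
              rw [h2, hev]; congr 1; exact congrArg _ (Subsingleton.elim _ _))) hwv
          · have hii : i ≠ i2 := by
              intro hh
              exact hwu (einj (by rw [h2, h, hh]))
            rw [h]
            show (⊤ ⊕g ⊤ : SimpleGraph (Fin 1 ⊕ Fin t)).Adj (Sum.inr i) (Sum.inr i2)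
            simp only [SimpleGraph.sum_adj, top_adj]
            exact hii
          · rw [h]; trivial
        exact this
      have h1 : (Set.univ \ {u, v} : Set V).ncard = Fintype.card V - 2 := by
        rw [Set.ncard_diff (Set.subset_univ _), Set.ncard_univ, Set.ncard_pair hu,
          Nat.card_eq_fintype_card]
      have h2 := Set.ncard_le_ncard hsub (Set.toFinite _)
      omega
    · apply hadj
      rw [key v u, hev, h]
      trivial
  · rintro ⟨v, hv⟩
    set N : Set V := {u | G.Adj v u} with hN
    set S : Set V := {u | u ≠ v ∧ ¬ G.Adj v u} with hS
    have hSadj : ∀ u ∈ S, ∀ w : V, w ≠ u → w ≠ v → G.Adj u w := by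
      intro u hu w hwu hwv
      have hcard : ¬ ((G.neighborSet u \ {v}).ncard < Fintype.card V - 2) :=
        fun hc => hu.2 (hv u hu.1 hc)
      have hsub : G.neighborSet u \ {v} ⊆ Set.univ \ {u, v} := by
        intro x hx
        refine ⟨trivial, ?_⟩
        intro hmem
        rcases hmem with h' | h'
        · exact G.irrefl (h' ▸ hx.1)
        · exact hx.2 h'
      have h1 : (Set.univ \ {u, v} : Set V).ncard = Fintype.card V - 2 := by
        rw [Set.ncard_diff (Set.subset_univ _), Set.ncard_univ, Set.ncard_pair hu.1,
          Nat.card_eq_fintype_card]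
      have heq : G.neighborSet u \ {v} = Set.univ \ {u, v} := by
        apply Set.eq_of_subset_of_ncard_le hsub _ (Set.toFinite _)
        omega
      have : w ∈ G.neighborSet u \ {v} := by
        rw [heq]
        exact ⟨trivial, by simp [hwu, hwv]⟩
      exact this.1
    haveI : Fintype ↥S := Fintype.ofFinite _
    set t := Fintype.card ↥S with ht
    set eS : Fin t ≃ ↥S := (Fintype.equivFin ↥S).symm with heS
    have hSv : ∀ i : Fin t, ((eS i : ↥S) : V) ≠ v := fun i => (eS i).2.1
    have hSnadj : ∀ i : Fin t, ¬ G.Adj v ((eS i : ↥S) : V) := fun i => (eS i).2.2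
    refine ⟨t, ↥N, G.induce N, ⟨?_⟩⟩
    let g : ((Fin 1 ⊕ Fin t) ⊕ ↥N) → V := fun x => match x with
      | Sum.inl (Sum.inl _) => v
      | Sum.inl (Sum.inr i) => ((eS i : ↥S) : V)
      | Sum.inr w => (w : V)
    have hNadj : ∀ w : ↥N, G.Adj v (w : V) := fun w => w.2
    have hNv : ∀ w : ↥N, (w : V) ≠ v := fun w h => G.irrefl (by
      have := hNadj w; rwa [h] at this)
    have hSN : ∀ (i : Fin t) (w : ↥N), ((eS i : ↥S) : V) ≠ (w : V) := by
      intro i w h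
      exact hSnadj i (h ▸ w.2)
    have hg : Function.Bijective g := by
      constructor
      · rintro ((a | i) | w) ((b | j) | w') hab <;>
          simp only [g] at hab
        · rw [Subsingleton.elim a b]
        · exact absurd hab.symm (hSv j)
        · exact absurd hab.symm (hNv w')
        · exact absurd hab (hSv i)
        · have : eS i = eS j := Subtype.ext hab
          rw [eS.injective this]
        · exact absurd hab (hSN i w')
        · exact absurd hab (hNv w)
        · exact absurd hab.symm (hSN j w)
        · rw [Subtype.ext hab]
      · intro x
        by_cases hx1 : x = v
        · exact ⟨Sum.inl (Sum.inl 0), hx1.symm⟩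
        · by_cases hx2 : G.Adj v x
          · exact ⟨Sum.inr ⟨x, hx2⟩, rfl⟩
          · refine ⟨Sum.inl (Sum.inr (eS.symm ⟨x, hx1, hx2⟩)), ?_⟩
            simp only [g, Equiv.apply_symm_apply]
    have mri : ∀ a b, G.Adj (g a) (g b) ↔
        (graphJoin ((⊤ : SimpleGraph (Fin 1)) ⊕g (⊤ : SimpleGraph (Fin t)))
          (G.induce N)).Adj a b := by
      rintro ((a | i) | w) ((b | j) | w') <;> simp only [g]
      · show G.Adj v v ↔ (⊤ ⊕g ⊤ : SimpleGraph (Fin 1 ⊕ Fin t)).Adj (Sum.inl a) (Sum.inl b)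
        simp [Subsingleton.elim a b]
      · show G.Adj v _ ↔ (⊤ ⊕g ⊤ : SimpleGraph (Fin 1 ⊕ Fin t)).Adj (Sum.inl a) (Sum.inr j)
        simp [hSnadj j]
      · show G.Adj v _ ↔ True
        exact iff_of_true (hNadj w') trivial
      · show G.Adj _ v ↔ (⊤ ⊕g ⊤ : SimpleGraph (Fin 1 ⊕ Fin t)).Adj (Sum.inr i) (Sum.inl b)
        simp only [SimpleGraph.sum_adj]
        constructor
        · exact fun h => absurd h.symm (hSnadj i)
        · simp
      · show G.Adj _ _ ↔ (⊤ ⊕g ⊤ : SimpleGraph (Fin 1 ⊕ Fin t)).Adj (Sum.inr i) (Sum.inr j)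
        simp only [SimpleGraph.sum_adj, top_adj]
        constructor
        · intro h hij
          exact G.irrefl (by rw [hij] at h; exact h)
        · intro hij
          refine hSadj _ (eS i).2 _ ?_ (hSv j)
          intro h
          exact hij (eS.injective (Subtype.ext h)).symm
      · show G.Adj _ _ ↔ True
        simp only [iff_true]
        exact hSadj _ (eS i).2 _ (hSN i w').symm (hNv w')
      · show G.Adj _ v ↔ True
        exact iff_of_true (hNadj w).symm trivial
      · show G.Adj _ _ ↔ True
        simp only [iff_true]
        exact (hSadj _ (eS j).2 _ (hSN j w).symm (hNv w)).symm
      · show G.Adj _ _ ↔ (G.induce N).Adj w w'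
        exact Iff.rfl
    exact SimpleGraph.Iso.symm (RelIso.mk (Equiv.ofBijective g hg) (mri _ _))
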